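/- Let V and Q be complex Hilbert spaces, a : V × V → ℂ a bounded sesquilinear form, b : V × Q → ℂ a bounded sesquilinear form. Assume: (i) there is α > 0 with |a(u,u)| ≥ α‖u‖² for all u in the kernel Z = {v ∈ V : b(v,q) = 0 ∀q ∈ Q}; (ii) b satisfies the inf-sup condition: inf_{q≠0} sup_{v≠0} |b(v,q)|/(‖v‖‖q‖) ≥ β > 0. Then for every bounded conjugate-linear functional F on V, the mixed problem — find (u, p) ∈ V × Q with a(u,v) + b(v,p) = F(v) for all v ∈ V and b(u,q) = 0 for all q ∈ Q — has a unique solution, and ‖u‖ + ‖p‖ ≤ C‖F‖. -/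

import Mathlib

set_option linter.unusedSectionVars false
set_option maxHeartbeats 1000000

noncomputable section
open InnerProductSpace

namespace BBaux

local notation "⟪" x ", " y "⟫" => @inner ℂ _ _ x y

variable {V : Type*} [NormedAddCommGroup V] [InnerProductSpace ℂ V] [CompleteSpace V]
variable {Q : Type*} [NormedAddCommGroup Q] [InnerProductSpace ℂ Q] [CompleteSpace Q]

def conjFun (F : V →L⋆[ℂ] ℂ) : V →L[ℂ] ℂ :=
  LinearMap.mkContinuous
    { toFun := fun v => (starRingEnd ℂ) (F v)
      map_add' := fun x y => by simp
      map_smul' := fun c x => by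
        simp [ContinuousLinearMap.map_smulₛₗ, mul_comm] }
    ‖F‖ fun v => by simpa using F.le_opNorm v

def reprV (F : V →L⋆[ℂ] ℂ) : V := (toDual ℂ V).symm (conjFun F)

theorem inner_reprV (F : V →L⋆[ℂ] ℂ) (v : V) : ⟪v, reprV F⟫ = F v := by
  have h : ⟪reprV F, v⟫ = (starRingEnd ℂ) (F v) := toDual_symm_apply
  calc ⟪v, reprV F⟫ = (starRingEnd ℂ) ⟪reprV F, v⟫ := (inner_conj_symm _ _).symm
  _ = F v := by rw [h, Complex.conj_conj]

theorem norm_reprV_le (F : V →L⋆[ℂ] ℂ) : ‖reprV F‖ ≤ ‖F‖ := by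
  have h1 : ‖reprV F‖ = ‖conjFun F‖ := LinearIsometryEquiv.norm_map _ _
  have h2 : ‖conjFun F‖ ≤ ‖F‖ := LinearMap.mkContinuous_norm_le _ (norm_nonneg F) _
  linarith

theorem reprV_add (F G : V →L⋆[ℂ] ℂ) : reprV (F + G) = reprV F + reprV G := by
  apply ext_inner_left ℂ
  intro v
  rw [inner_add_right, inner_reprV, inner_reprV, inner_reprV]
  simp

theorem reprV_smul (c : ℂ) (F : V →L⋆[ℂ] ℂ) : reprV (c • F) = c • reprV F := by
  apply ext_inner_left ℂ
  intro v
  rw [inner_smul_right, inner_reprV, inner_reprV]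
  simp

def opA (a : V →L[ℂ] V →L⋆[ℂ] ℂ) : V →L[ℂ] V :=
  LinearMap.mkContinuous
    { toFun := fun u => reprV (a u)
      map_add' := fun u u' => by simp only [map_add]; exact reprV_add _ _
      map_smul' := fun c u => by
        simp only [map_smul, RingHom.id_apply]; exact reprV_smul _ _ }
    ‖a‖ fun u => (norm_reprV_le _).trans (a.le_opNorm u)

theorem inner_opA (a : V →L[ℂ] V →L⋆[ℂ] ℂ) (u v : V) : ⟪v, opA a u⟫ = a u v :=
  inner_reprV _ _

theorem norm_opA_le (a : V →L[ℂ] V →L⋆[ℂ] ℂ) (u : V) : ‖opA a u‖ ≤ ‖a‖ * ‖u‖ :=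
  (norm_reprV_le _).trans (a.le_opNorm u)

def opB (b : V →L⋆[ℂ] Q →L[ℂ] ℂ) : Q →L[ℂ] V :=
  LinearMap.mkContinuous
    { toFun := fun q => reprV (b.flip q)
      map_add' := fun q q' => by simp only [map_add]; exact reprV_add _ _
      map_smul' := fun c q => by
        simp only [map_smul, RingHom.id_apply]; exact reprV_smul _ _ }
    ‖b.flip‖ fun q => (norm_reprV_le _).trans (b.flip.le_opNorm q)

theorem inner_opB (b : V →L⋆[ℂ] Q →L[ℂ] ℂ) (q : Q) (v : V) : ⟪v, opB b q⟫ = b v q :=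
  inner_reprV _ _

/-- helper: from `α‖z‖² ≤ ‖z‖ * c` with `α > 0, c ≥ 0` conclude `α‖z‖ ≤ c`. -/
theorem div_trick {α nz c : ℝ} (hα : 0 < α) (hnz : 0 ≤ nz) (hc : 0 ≤ c)
    (h : α * nz ^ 2 ≤ nz * c) : α * nz ≤ c := by
  rcases eq_or_lt_of_le hnz with h0 | h0
  · nlinarith
  · nlinarith

end BBaux

open BBaux InnerProductSpace

local notation "⟪" x ", " y "⟫" => @inner ℂ _ _ x y

/-- **Babuška–Brezzi well-posedness for complex mixed (saddle-point) problems.**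
`a` is a bounded sesquilinear form on `V` (linear in the first, conjugate-linear in the
second argument), `b` a bounded sesquilinear form on `V × Q` (conjugate-linear in the
`V`-argument, which plays the role of the test function).  Assume `a` is coercive in
modulus on the kernel `Z = {v : b(v,q) = 0 ∀q}` and `b` satisfies the inf-sup
condition.  Then for each bounded conjugate-linear functional `F` the mixed problem has
a unique solution `(u,p)` with `‖u‖ + ‖p‖ ≤ C‖F‖`. -/
theorem babuska_brezzi_wellposed
    {V Q : Type*} [NormedAddCommGroup V] [InnerProductSpace ℂ V] [CompleteSpace V]
    [NormedAddCommGroup Q] [InnerProductSpace ℂ Q] [CompleteSpace Q]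
    (a : V →L[ℂ] V →L⋆[ℂ] ℂ) (b : V →L⋆[ℂ] Q →L[ℂ] ℂ)
    (α βc : ℝ) (hα : 0 < α) (hβc : 0 < βc)
    (hcoer : ∀ u : V, (∀ q : Q, b u q = 0) → α * ‖u‖ ^ 2 ≤ ‖a u u‖)
    (hinfsup : ∀ q : Q, ∃ v : V, v ≠ 0 ∧ βc * ‖v‖ * ‖q‖ ≤ ‖b v q‖) :
    ∃ C > (0 : ℝ), ∀ F : V →L⋆[ℂ] ℂ,
      (∃! up : V × Q, (∀ v : V, a up.1 v + b v up.2 = F v) ∧ ∀ q : Q, b up.1 q = 0) ∧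
      ∀ up : V × Q,
        ((∀ v : V, a up.1 v + b v up.2 = F v) ∧ ∀ q : Q, b up.1 q = 0) →
        ‖up.1‖ + ‖up.2‖ ≤ C * ‖F‖ := by
  set A : V →L[ℂ] V := opA a with hAdef
  set B : Q →L[ℂ] V := opB b with hBdef
  have hA : ∀ u v : V, ⟪v, A u⟫ = a u v := fun u v => inner_opA a u v
  have hB : ∀ (v : V) (q : Q), ⟪v, B q⟫ = b v q := fun v q => inner_opB b q v
  -- B is bounded below
  have hBlow : ∀ q : Q, βc * ‖q‖ ≤ ‖B q‖ := by
    intro q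
    obtain ⟨v, hv0, hv⟩ := hinfsup q
    have h1 : ‖b v q‖ ≤ ‖v‖ * ‖B q‖ := by
      rw [← hB v q]; exact norm_inner_le_norm v (B q)
    have hvpos : 0 < ‖v‖ := norm_pos_iff.2 hv0
    have h2 := hv.trans h1
    nlinarith [h2, hvpos, norm_nonneg (B q)]
  -- antilipschitz of B, closed range
  have hBanti : AntilipschitzWith ⟨βc⁻¹, (inv_nonneg.2 hβc.le)⟩ B :=
    B.antilipschitz_of_bound (fun q => by
      change ‖q‖ ≤ βc⁻¹ * ‖B q‖
      calc ‖q‖ = βc⁻¹ * (βc * ‖q‖) := by field_simp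
      _ ≤ βc⁻¹ * ‖B q‖ := mul_le_mul_of_nonneg_left (hBlow q) (inv_pos.2 hβc).le)
  set W : Submodule ℂ V := LinearMap.range (B : Q →ₗ[ℂ] V) with hWdef
  have hWrange : (W : Set V) = Set.range B := by
    ext x; simp [hWdef, LinearMap.mem_range]
  have hWclosed : IsClosed (W : Set V) := by
    rw [hWrange]; exact hBanti.isClosed_range B.uniformContinuous
  haveI : CompleteSpace W := hWclosed.completeSpace_coe
  set Z : Submodule ℂ V := Wᗮ with hZdef
  haveI : CompleteSpace Z := (Submodule.isClosed_orthogonal W).completeSpace_coe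
  have hZperp : Zᗮ = W := Submodule.orthogonal_orthogonal W
  -- membership of Z
  have hZmem : ∀ v : V, v ∈ Z ↔ ∀ q : Q, b v q = 0 := by
    intro v
    constructor
    · intro hv q
      rw [← hB v q]
      have h := (Submodule.mem_orthogonal W v).1 hv (B q) (LinearMap.mem_range.2 ⟨q, rfl⟩)
      rw [inner_eq_zero_symm]
      exact h
    · intro hv
      rw [Submodule.mem_orthogonal]
      rintro u ⟨q, rfl⟩
      have h : ⟪v, B q⟫ = 0 := by rw [hB]; exact hv q
      rw [inner_eq_zero_symm]
      exact h
  set P : V →L[ℂ] Z := Submodule.orthogonalProjectionOnto Z with hPdef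
  set T : Z →L[ℂ] Z := P.comp (A.comp Z.subtypeL) with hTdef
  have hTapp : ∀ z : Z, T z = P (A (z : V)) := fun z => rfl
  -- key inner product identity on Z
  have hTinner : ∀ z w : Z, ⟪w, T z⟫ = ⟪(w : V), A (z : V)⟫ := by
    intro z w
    have h1 : ⟪(w : V), A (z : V) - (P (A (z : V)) : V)⟫ = 0 := by
      have hm : A (z : V) - (P (A (z : V)) : V) ∈ Zᗮ := Submodule.sub_starProjection_mem_orthogonal (K := Z) (A (z : V))
      exact (Submodule.mem_orthogonal Z _).1 hm (w : V) w.2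
    have h2 : ⟪(w : V), (P (A (z : V)) : V)⟫ = ⟪(w : V), A (z : V)⟫ := by
      have h := inner_sub_right (𝕜 := ℂ) (w : V) (A (z : V)) ((P (A (z : V)) : V))
      rw [h1] at h
      linear_combination h
    rw [hTapp]
    rw [Submodule.coe_inner]
    rw [h2]
  -- coercivity of T
  have hTcoer : ∀ z : Z, α * ‖z‖ ≤ ‖T z‖ := by
    intro z
    have hz : ∀ q : Q, b (z : V) q = 0 := (hZmem (z : V)).1 z.2
    have h1 : α * ‖(z : V)‖ ^ 2 ≤ ‖a (z : V) (z : V)‖ := hcoer _ hz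
    have h2 : a (z : V) (z : V) = ⟪z, T z⟫ := by rw [hTinner z z, hA]
    have h3 : ‖⟪z, T z⟫‖ ≤ ‖z‖ * ‖T z‖ := norm_inner_le_norm z (T z)
    have h4 : ‖(z : V)‖ = ‖z‖ := rfl
    refine div_trick hα (norm_nonneg z) (norm_nonneg (T z)) ?_
    rw [← h4]
    calc α * ‖(z : V)‖ ^ 2 ≤ ‖a (z : V) (z : V)‖ := h1
    _ = ‖⟪z, T z⟫‖ := by rw [h2]
    _ ≤ ‖z‖ * ‖T z‖ := h3
    _ = ‖(z : V)‖ * ‖T z‖ := by rw [h4]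
  -- T is surjective
  have hTsurj : Function.Surjective T := by
    have hTanti : AntilipschitzWith ⟨α⁻¹, (inv_nonneg.2 hα.le)⟩ T :=
      T.antilipschitz_of_bound (fun z => by
        change ‖z‖ ≤ α⁻¹ * ‖T z‖
        calc ‖z‖ = α⁻¹ * (α * ‖z‖) := by field_simp
        _ ≤ α⁻¹ * ‖T z‖ := mul_le_mul_of_nonneg_left (hTcoer z) (inv_pos.2 hα).le)
    set R : Submodule ℂ Z := LinearMap.range (T : Z →ₗ[ℂ] Z) with hRdef
    have hRrange : (R : Set Z) = Set.range T := by
      ext x; simp [hRdef, LinearMap.mem_range]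
    have hRclosed : IsClosed (R : Set Z) := by
      rw [hRrange]; exact hTanti.isClosed_range T.uniformContinuous
    haveI : CompleteSpace R := hRclosed.completeSpace_coe
    have hRperp : Rᗮ = ⊥ := by
      rw [Submodule.eq_bot_iff]
      intro w hw
      have h1 : ⟪T w, w⟫ = 0 := (Submodule.mem_orthogonal R w).1 hw (T w) ⟨w, rfl⟩
      have h2 : ⟪w, T w⟫ = 0 := by
        rw [inner_eq_zero_symm]
        exact h1
      have hz : ∀ q : Q, b ((w : Z) : V) q = 0 := (hZmem _).1 (w : Z).2
      have h3 : α * ‖((w : Z) : V)‖ ^ 2 ≤ ‖a ((w : Z) : V) ((w : Z) : V)‖ := hcoer _ hz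
      have h4 : a ((w : Z) : V) ((w : Z) : V) = ⟪w, T w⟫ := by rw [hTinner w w, hA]
      rw [h4, h2, norm_zero] at h3
      have h5 : ‖((w : Z) : V)‖ = 0 := by
        by_contra hne
        have hpos : 0 < ‖((w : Z) : V)‖ := lt_of_le_of_ne (norm_nonneg _) (Ne.symm hne)
        nlinarith [mul_pos hα (mul_pos hpos hpos)]
      have : (w : Z) = 0 := by
        have := norm_eq_zero.1 h5
        exact Subtype.ext this
      exact this
    have hRtop : R = ⊤ := (Submodule.orthogonal_eq_bot_iff).1 hRperp
    intro y
    have : y ∈ R := hRtop ▸ Submodule.mem_top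
    obtain ⟨x, hx⟩ := this
    exact ⟨x, hx⟩
  -- norm of orthogonal projection
  have hPnorm : ∀ v : V, ‖P v‖ ≤ ‖v‖ := by
    intro v
    have hop : ‖P‖ ≤ 1 := Submodule.orthogonalProjectionOnto_norm_le Z
    calc ‖P v‖ ≤ ‖P‖ * ‖v‖ := P.le_opNorm v
    _ ≤ 1 * ‖v‖ := mul_le_mul_of_nonneg_right hop (norm_nonneg v)
    _ = ‖v‖ := one_mul _
  -- the constant
  set C : ℝ := α⁻¹ + βc⁻¹ * (1 + ‖a‖ * α⁻¹) with hCdef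
  have hC : 0 < C := by positivity
  refine ⟨C, hC, fun F => ?_⟩
  -- stability estimate
  have stab : ∀ (G : V →L⋆[ℂ] ℂ) (u : V) (p : Q),
      (∀ v : V, a u v + b v p = G v) → (∀ q : Q, b u q = 0) →
      ‖u‖ ≤ α⁻¹ * ‖G‖ ∧ ‖p‖ ≤ βc⁻¹ * (1 + ‖a‖ * α⁻¹) * ‖G‖ := by
    intro G u p hG hbu
    set f : V := reprV G with hfdef
    have hf : ∀ v : V, ⟪v, f⟫ = G v := fun v => inner_reprV G v
    have hfn : ‖f‖ ≤ ‖G‖ := norm_reprV_le G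
    have hu : u ∈ Z := (hZmem u).2 hbu
    have heq : A u + B p = f := by
      apply ext_inner_left ℂ
      intro v
      rw [inner_add_right, hA, hB, hf, hG]
    have hBpZ : B p ∈ Zᗮ := hZperp ▸ ⟨p, rfl⟩
    have hPBp : P (B p) = 0 :=
      Submodule.orthogonalProjectionOnto_apply_of_mem_orthogonal hBpZ
    set z : Z := ⟨u, hu⟩ with hzdef
    have hTz : T z = P f := by
      rw [hTapp]
      have : A u = f - B p := by rw [← heq]; abel
      show P (A u) = P f
      rw [this, map_sub, hPBp, sub_zero]
    have hun : ‖u‖ ≤ α⁻¹ * ‖G‖ := by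
      have h1 : α * ‖z‖ ≤ ‖T z‖ := hTcoer z
      have h2 : ‖T z‖ ≤ ‖f‖ := by rw [hTz]; exact hPnorm f
      have h3 : ‖z‖ = ‖u‖ := rfl
      rw [h3] at h1
      rw [inv_mul_eq_div, le_div_iff₀ hα]
      nlinarith
    refine ⟨hun, ?_⟩
    have hBp : B p = f - A u := by rw [← heq]; abel
    have h1 : βc * ‖p‖ ≤ ‖B p‖ := hBlow p
    have h2 : ‖B p‖ ≤ ‖f‖ + ‖a‖ * ‖u‖ := by
      rw [hBp]
      calc ‖f - A u‖ ≤ ‖f‖ + ‖A u‖ := norm_sub_le f (A u)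
      _ ≤ ‖f‖ + ‖a‖ * ‖u‖ := by
          have := norm_opA_le a u
          linarith
    have h3 : ‖a‖ * ‖u‖ ≤ ‖a‖ * (α⁻¹ * ‖G‖) :=
      mul_le_mul_of_nonneg_left hun (norm_nonneg a)
    have : βc * ‖p‖ ≤ ‖G‖ + ‖a‖ * (α⁻¹ * ‖G‖) := by linarith
    rw [inv_mul_eq_div, div_mul_eq_mul_div, le_div_iff₀ hβc]
    nlinarith
  constructor
  · -- existence and uniqueness
    -- existence
    set f : V := reprV F with hfdef
    have hf : ∀ v : V, ⟪v, f⟫ = F v := fun v => inner_reprV F v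
    obtain ⟨u₀, hu₀⟩ := hTsurj (P f)
    set w : V := f - A (u₀ : V) with hwdef
    have hPw : P w = 0 := by
      rw [hwdef, map_sub]
      have : P (A (u₀ : V)) = T u₀ := rfl
      rw [this, hu₀, sub_self]
    have hwperp : w ∈ Zᗮ := by
      have hm : w - (P w : V) ∈ Zᗮ := Submodule.sub_starProjection_mem_orthogonal (K := Z) w
      rwa [hPw, Submodule.coe_zero, sub_zero] at hm
    have hwW : w ∈ W := hZperp ▸ hwperp
    obtain ⟨p₀, hp₀⟩ := hwW
    have hp₀' : B p₀ = w := hp₀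
    have hsol : (∀ v : V, a (u₀ : V) v + b v p₀ = F v) ∧ ∀ q : Q, b (u₀ : V) q = 0 := by
      constructor
      · intro v
        rw [← hA, ← hB, hp₀', ← inner_add_right]
        rw [hwdef]
        rw [show A (u₀ : V) + (f - A (u₀ : V)) = f by abel]
        exact hf v
      · intro q
        exact (hZmem (u₀ : V)).1 u₀.2 q
    refine ⟨((u₀ : V), p₀), hsol, ?_⟩
    -- uniqueness
    rintro ⟨u', p'⟩ ⟨h1', h2'⟩
    have hdsol : ∀ v : V, a (u' - (u₀ : V)) v + b v (p' - p₀) = (0 : V →L⋆[ℂ] ℂ) v := by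
      intro v
      have e1 := h1' v
      have e2 := hsol.1 v
      simp only [map_sub, ContinuousLinearMap.sub_apply, ContinuousLinearMap.zero_apply]
      linear_combination e1 - e2
    have hdker : ∀ q : Q, b (u' - (u₀ : V)) q = 0 := by
      intro q
      simp only [map_sub, ContinuousLinearMap.sub_apply]
      rw [h2' q, hsol.2 q, sub_zero]
    obtain ⟨hn1, hn2⟩ := stab 0 (u' - (u₀ : V)) (p' - p₀) hdsol hdker
    rw [norm_zero, mul_zero] at hn1 hn2
    have e1 : u' = (u₀ : V) := by
      have := norm_le_zero_iff.1 hn1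
      rwa [sub_eq_zero] at this
    have e2 : p' = p₀ := by
      have := norm_le_zero_iff.1 hn2
      rwa [sub_eq_zero] at this
    exact Prod.ext e1 e2
  · -- estimate
    rintro ⟨u, p⟩ ⟨h1, h2⟩
    obtain ⟨hn1, hn2⟩ := stab F u p h1 h2
    simp only
    calc ‖u‖ + ‖p‖ ≤ α⁻¹ * ‖F‖ + βc⁻¹ * (1 + ‖a‖ * α⁻¹) * ‖F‖ := add_le_add hn1 hn2
    _ = C * ‖F‖ := by rw [hCdef]; ring
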